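/- arXiv:1904.07147 — 2 statements merged into one kernel-verified Lean document; each statement's English description precedes it below -/
import Mathlib

section
/- If Y ∈ ℝ^{n×p} is a spurious 2-critical point of (BM), then C lies in the set Sⁿ_{n−p} + 𝓛; explicitly, there exists λ ∈ ℝᵐ, vanishing outside the attainable index set I(Y), such that the matrix C − Σᵢ λᵢ Aᵢ has rank at most n − p. -/
open Matrix MeasureTheory

noncomputable section

/-- The `k`-th triangular number `τ(k) = k(k+1)/2`. -/
def tau (k : ℕ) : ℕ := k * (k + 1) / 2

/-- The space `Sⁿ` of symmetric `n × n` real matrices, as a submodule of all matrices. -/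
def SymMat (n : ℕ) : Submodule ℝ (Matrix (Fin n) (Fin n) ℝ) where
  carrier := {A | A.IsSymm}
  add_mem' := fun ha hb => ha.add hb
  zero_mem' := by simp [Matrix.IsSymm]
  smul_mem' := fun c A hA => hA.smul c

instance (n : ℕ) : MeasurableSpace (Matrix (Fin n) (Fin n) ℝ) := borel _
instance (n : ℕ) : BorelSpace (Matrix (Fin n) (Fin n) ℝ) := ⟨rfl⟩
instance (n : ℕ) : MeasurableSpace (SymMat n) := borel _
instance (n : ℕ) : BorelSpace (SymMat n) := ⟨rfl⟩

/-- The feasible set `𝒳` of the SDP: `X` PSD, `tr(AᵢX) = bᵢ` for `i < m₁` (equalities),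
`tr(AᵢX) ≥ bᵢ` for the remaining indices (inequalities). -/
def Feas (n m m₁ : ℕ) (A : Fin m → Matrix (Fin n) (Fin n) ℝ) (b : Fin m → ℝ) :
    Set (Matrix (Fin n) (Fin n) ℝ) :=
  {X | X.PosSemidef ∧ ∀ i : Fin m,
      if (i : ℕ) < m₁ then (A i * X).trace = b i else b i ≤ (A i * X).trace}

/-- The slack matrix `S(λ) = C - Σᵢ λᵢ Aᵢ`. -/
def Slack {n m : ℕ} (C : Matrix (Fin n) (Fin n) ℝ) (A : Fin m → Matrix (Fin n) (Fin n) ℝ)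
    (lam : Fin m → ℝ) : Matrix (Fin n) (Fin n) ℝ :=
  C - ∑ i, lam i • A i

/-- `Y` is 1st-order critical for (BM) with multiplier `λ`. -/
def IsCrit1 (n p m m₁ : ℕ) (C : Matrix (Fin n) (Fin n) ℝ)
    (A : Fin m → Matrix (Fin n) (Fin n) ℝ) (b : Fin m → ℝ)
    (Y : Matrix (Fin n) (Fin p) ℝ) (lam : Fin m → ℝ) : Prop :=
  Y * Yᵀ ∈ Feas n m m₁ A b ∧
  (∀ i : Fin m, m₁ ≤ (i : ℕ) → 0 ≤ lam i) ∧
  (∀ i : Fin m, (A i * (Y * Yᵀ)).trace ≠ b i → lam i = 0) ∧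
  Slack C A lam * Y = 0

/-- `Y` is 2nd-order critical for (BM) with multiplier `λ`. -/
def IsCrit2 (n p m m₁ : ℕ) (C : Matrix (Fin n) (Fin n) ℝ)
    (A : Fin m → Matrix (Fin n) (Fin n) ℝ) (b : Fin m → ℝ)
    (Y : Matrix (Fin n) (Fin p) ℝ) (lam : Fin m → ℝ) : Prop :=
  IsCrit1 n p m m₁ C A b Y lam ∧
  ∀ U : Matrix (Fin n) (Fin p) ℝ,
    (∀ i : Fin m, (A i * (Y * Yᵀ)).trace = b i → (A i * (U * Yᵀ)).trace = 0) →
    0 ≤ (Slack C A lam * (U * Uᵀ)).trace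

/-- `X` is an optimal solution of (SDP). -/
def IsOptimal (n m m₁ : ℕ) (C : Matrix (Fin n) (Fin n) ℝ)
    (A : Fin m → Matrix (Fin n) (Fin n) ℝ) (b : Fin m → ℝ)
    (X : Matrix (Fin n) (Fin n) ℝ) : Prop :=
  X ∈ Feas n m m₁ A b ∧ ∀ X' ∈ Feas n m m₁ A b, (C * X).trace ≤ (C * X').trace

lemma psd_trace_nonneg' {n : ℕ} {M : Matrix (Fin n) (Fin n) ℝ} (hM : M.PosSemidef) :
    0 ≤ M.trace := by
  rw [Matrix.trace]
  refine Finset.sum_nonneg fun i _ => ?_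
  simpa using hM.dotProduct_mulVec_nonneg (Pi.single i 1)

lemma trace_mul_psd_nonneg' {n : ℕ} {P Q : Matrix (Fin n) (Fin n) ℝ}
    (hP : P.PosSemidef) (hQ : Q.PosSemidef) : 0 ≤ (P * Q).trace := by
  open scoped MatrixOrder in obtain ⟨B, rfl⟩ := CStarAlgebra.nonneg_iff_eq_star_mul_self.mp hP.nonneg
  rw [Matrix.mul_assoc, Matrix.trace_mul_comm]
  exact psd_trace_nonneg' (hQ.mul_mul_conjTranspose_same B)

lemma vecMulVec_mul_self_eq {n p : ℕ} (u : Fin n → ℝ) (z : Fin p → ℝ) :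
    vecMulVec u z * (vecMulVec u z)ᵀ = (z ⬝ᵥ z) • vecMulVec u u := by
  ext i j
  simp only [Matrix.mul_apply, Matrix.vecMulVec_apply, Matrix.transpose_apply,
    Matrix.smul_apply, smul_eq_mul, dotProduct]
  rw [Finset.sum_mul]
  exact Finset.sum_congr rfl fun k _ => by ring

lemma trace_mul_vecMulVec {n : ℕ} (S : Matrix (Fin n) (Fin n) ℝ) (u : Fin n → ℝ) :
    (S * vecMulVec u u).trace = u ⬝ᵥ S *ᵥ u := by
  simp only [Matrix.trace, Matrix.diag, Matrix.mul_apply, Matrix.vecMulVec_apply,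
    dotProduct, Matrix.mulVec, Finset.mul_sum]
  refine Finset.sum_congr rfl fun i _ => Finset.sum_congr rfl fun j _ => by ring

lemma vecMulVec_mul_transpose_eq_zero {n p : ℕ} (Y : Matrix (Fin n) (Fin p) ℝ)
    (u : Fin n → ℝ) (z : Fin p → ℝ) (hz : Y *ᵥ z = 0) :
    vecMulVec u z * Yᵀ = 0 := by
  ext i k
  have hk : ∑ j, Y k j * z j = 0 := by
    have := congrFun hz k
    simpa [Matrix.mulVec, dotProduct] using this
  simp only [Matrix.mul_apply, Matrix.vecMulVec_apply, Matrix.transpose_apply,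
    Matrix.zero_apply]
  calc ∑ j, u i * z j * Y k j = u i * ∑ j, Y k j * z j := by
        rw [Finset.mul_sum]; exact Finset.sum_congr rfl fun j _ => by ring
    _ = 0 := by rw [hk, mul_zero]

/-- If `Y` is a spurious 2-critical point of (BM), then `C ∈ Sⁿ_{n-p} + 𝓛`:
there is a multiplier `λ`, vanishing outside the (attainable) active set `I(Y)`,
such that `C - Σᵢ λᵢ Aᵢ` has rank at most `n - p`. -/
theorem spurious_implies_cost_in_bad_set
    (n p m m₁ : ℕ)
    (A : Fin m → Matrix (Fin n) (Fin n) ℝ) (hA : ∀ i, (A i).IsSymm)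
    (b : Fin m → ℝ)
    (C : Matrix (Fin n) (Fin n) ℝ) (hC : C.IsSymm)
    (Y : Matrix (Fin n) (Fin p) ℝ)
    (hcrit : ∃ lam : Fin m → ℝ, IsCrit2 n p m m₁ C A b Y lam)
    (hspur : ¬ IsOptimal n m m₁ C A b (Y * Yᵀ)) :
    ∃ lam : Fin m → ℝ,
      (∀ i : Fin m, (A i * (Y * Yᵀ)).trace ≠ b i → lam i = 0) ∧
      ((Slack C A lam).rank : ℤ) ≤ (n : ℤ) - (p : ℤ) := by
  
  obtain ⟨lam, ⟨⟨hfeas, hpos, hcomp, hSY⟩, h2⟩⟩ := hcrit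
  refine ⟨lam, hcomp, ?_⟩
  by_contra hr
  push_neg at hr
  set S := Slack C A lam with hS
  -- rank facts
  have hrange : LinearMap.range (Matrix.mulVecLin Y) ≤ LinearMap.ker (Matrix.mulVecLin S) := by
    rintro v ⟨z, rfl⟩
    simp only [LinearMap.mem_ker, Matrix.mulVecLin_apply, Matrix.mulVec_mulVec, hSY,
      Matrix.zero_mulVec]
  have h1 : S.rank + Module.finrank ℝ (LinearMap.ker (Matrix.mulVecLin S)) = n := by
    have := LinearMap.finrank_range_add_finrank_ker (Matrix.mulVecLin S)
    rwa [Module.finrank_fin_fun] at this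
  have h2' : Y.rank ≤ Module.finrank ℝ (LinearMap.ker (Matrix.mulVecLin S)) :=
    Submodule.finrank_mono hrange
  have hnp : n < S.rank + p := by
    have : (n : ℤ) < S.rank + p := by linarith
    exact_mod_cast this
  have hYrank : Y.rank < p := by omega
  have hYk : Y.rank + Module.finrank ℝ (LinearMap.ker (Matrix.mulVecLin Y)) = p := by
    have := LinearMap.finrank_range_add_finrank_ker (Matrix.mulVecLin Y)
    rwa [Module.finrank_fin_fun] at this
  have hker : LinearMap.ker (Matrix.mulVecLin Y) ≠ ⊥ := by
    intro h
    rw [h, finrank_bot] at hYk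
    omega
  obtain ⟨z, hzker, hz0⟩ := (Submodule.ne_bot_iff _).mp hker
  have hYz : Y *ᵥ z = 0 := hzker
  have hzz0 : 0 ≤ z ⬝ᵥ z := Finset.sum_nonneg fun i _ => mul_self_nonneg _
  have hzz : 0 < z ⬝ᵥ z :=
    lt_of_le_of_ne hzz0 fun h => hz0 (dotProduct_self_eq_zero.mp h.symm)
  have hSsymm : Sᵀ = S := by
    have ht : (∑ i, lam i • A i)ᵀ = ∑ i, lam i • A i := by
      rw [Matrix.transpose_sum]
      exact Finset.sum_congr rfl fun i _ => by rw [Matrix.transpose_smul, hA i]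
    rw [hS]
    show (C - ∑ i, lam i • A i)ᵀ = _
    rw [Matrix.transpose_sub, hC, ht]
    rfl
  have hSpsd : S.PosSemidef := by
    refine Matrix.PosSemidef.of_dotProduct_mulVec_nonneg ?_ ?_
    · ext i j
      simp only [Matrix.conjTranspose_apply, star_trivial]
      exact congrFun (congrFun hSsymm i) j
    · intro u
      have hU := h2 (vecMulVec u z) (fun i _ => by
        rw [vecMulVec_mul_transpose_eq_zero Y u z hYz, Matrix.mul_zero, Matrix.trace_zero])
      rw [vecMulVec_mul_self_eq, Matrix.mul_smul, Matrix.trace_smul, smul_eq_mul,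
        trace_mul_vecMulVec] at hU
      have := (mul_nonneg_iff_of_pos_left hzz).mp hU
      simpa using this
  have hCS : S + ∑ i, lam i • A i = C := by
    rw [hS]
    show C - ∑ i, lam i • A i + ∑ i, lam i • A i = C
    abel
  have hCtr : ∀ X : Matrix (Fin n) (Fin n) ℝ,
      (C * X).trace = (S * X).trace + ∑ i, lam i * (A i * X).trace := by
    intro X
    calc (C * X).trace = ((S + ∑ i, lam i • A i) * X).trace := by rw [hCS]
      _ = (S * X).trace + ((∑ i, lam i • A i) * X).trace := by
          rw [Matrix.add_mul, Matrix.trace_add]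
      _ = (S * X).trace + ∑ i, lam i * (A i * X).trace := by
          rw [Matrix.sum_mul, Matrix.trace_sum]
          congr 1
          exact Finset.sum_congr rfl fun i _ => by
            rw [Matrix.smul_mul, Matrix.trace_smul, smul_eq_mul]
  have hSYY : (S * (Y * Yᵀ)).trace = 0 := by
    rw [← Matrix.mul_assoc, hSY, Matrix.zero_mul, Matrix.trace_zero]
  apply hspur
  refine ⟨hfeas, fun X' hX' => ?_⟩
  rw [hCtr, hCtr, hSYY, zero_add]
  have hb : ∑ i, lam i * (A i * (Y * Yᵀ)).trace = ∑ i, lam i * b i := by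
    refine Finset.sum_congr rfl fun i _ => ?_
    by_cases h : (A i * (Y * Yᵀ)).trace = b i
    · rw [h]
    · rw [hcomp i h, zero_mul, zero_mul]
  rw [hb]
  have hb' : ∑ i, lam i * b i ≤ ∑ i, lam i * (A i * X').trace := by
    refine Finset.sum_le_sum fun i _ => ?_
    have hfi := hX'.2 i
    by_cases h : (i : ℕ) < m₁
    · rw [if_pos h] at hfi; rw [hfi]
    · rw [if_neg h] at hfi
      exact mul_le_mul_of_nonneg_left hfi (hpos i (le_of_not_gt h))
  have hSX' : 0 ≤ (S * X').trace := trace_mul_psd_nonneg' hSpsd hX'.1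
  linarith
end
end

section
/- Let Y ∈ ℝ^{n×p} be a 2-critical point of (BM) whose columns are linearly dependent (i.e., rank Y < p). Then Y Yᵀ is an optimal solution of (SDP), i.e., tr(C Y Yᵀ) ≤ tr(CX) for all X ∈ 𝒳. -/
open Matrix MeasureTheory

noncomputable section

lemma isHermitian_of_isSymm {n : ℕ} {S : Matrix (Fin n) (Fin n) ℝ} (h : S.IsSymm) :
    S.IsHermitian := by
  rwa [Matrix.IsHermitian, conjTranspose_eq_transpose_of_trivial]

lemma trace_mul_nonneg_of_posSemidef {n : ℕ} {S X : Matrix (Fin n) (Fin n) ℝ}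
    (hS : S.PosSemidef) (hX : X.PosSemidef) : 0 ≤ (S * X).trace := by
  obtain ⟨B, hB⟩ : ∃ B : Matrix (Fin n) (Fin n) ℝ, X = Bᴴ * B := by
    open scoped MatrixOrder in exact CStarAlgebra.nonneg_iff_eq_star_mul_self.mp hX.nonneg
  rw [hB, ← mul_assoc, trace_mul_comm]
  have key : ∀ i, 0 ≤ (B * (S * Bᴴ)) i i := by
    intro i
    have h1 := hS.dotProduct_mulVec_nonneg (star (B i))
    simp only [star_star] at h1
    exact h1.trans_eq (by simp only [dotProduct, mulVec, Matrix.mul_apply, conjTranspose_apply,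
      Pi.star_apply, star_trivial])
  rw [Matrix.trace]
  exact Finset.sum_nonneg fun i _ => key i

/-- If `Y` is a 2-critical point of (BM) whose columns are linearly
dependent (i.e., `rank Y < p`), then `Y Yᵀ` is an optimal solution of (SDP). -/
theorem crit2_rank_deficient_implies_optimal
    (n p m m₁ : ℕ)
    (A : Fin m → Matrix (Fin n) (Fin n) ℝ) (hA : ∀ i, (A i).IsSymm)
    (b : Fin m → ℝ)
    (C : Matrix (Fin n) (Fin n) ℝ) (hC : C.IsSymm)
    (Y : Matrix (Fin n) (Fin p) ℝ)
    (hcrit : ∃ lam : Fin m → ℝ, IsCrit2 n p m m₁ C A b Y lam)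
    (hrank : Y.rank < p) :
    ∀ X ∈ Feas n m m₁ A b, (C * (Y * Yᵀ)).trace ≤ (C * X).trace := by
  intro X hXfeas
  obtain ⟨lam, ⟨⟨hfeas, hpos, hcomp, hSY⟩, h2⟩⟩ := hcrit
  set S := Slack C A lam with hSdef
  -- find a nonzero kernel vector of Y
  have hker : LinearMap.ker Y.mulVecLin ≠ ⊥ := by
    intro hbot
    have hrn := LinearMap.finrank_range_add_finrank_ker Y.mulVecLin
    rw [hbot, finrank_bot, add_zero] at hrn
    have : Y.rank = p := by
      rw [Matrix.rank, hrn]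
      simp [Module.finrank_pi]
    omega
  obtain ⟨z, hz_mem, hz⟩ := Submodule.exists_mem_ne_zero_of_ne_bot hker
  have hYz : Y.mulVec z = 0 := hz_mem
  -- S is symmetric
  have hSsymm : S.IsSymm := by
    show (C - ∑ i, lam i • A i)ᵀ = _
    rw [Matrix.transpose_sub, Matrix.transpose_sum, hC]
    congr 1
    exact Finset.sum_congr rfl fun i _ => by rw [Matrix.transpose_smul, hA i]
  -- S is positive semidefinite
  have hSpsd : S.PosSemidef := by
    refine PosSemidef.of_dotProduct_mulVec_nonneg (isHermitian_of_isSymm hSsymm) ?_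
    intro v
    set U : Matrix (Fin n) (Fin p) ℝ := Matrix.vecMulVec v z with hU
    have hUY : U * Yᵀ = 0 := by
      ext i j
      have h0 : ∑ k, Y j k * z k = 0 := by
        simpa [Matrix.mulVec, dotProduct] using congrFun hYz j
      simp only [hU, Matrix.mul_apply, Matrix.vecMulVec_apply, Matrix.transpose_apply,
        Matrix.zero_apply]
      calc ∑ k, v i * z k * Y j k = v i * ∑ k, Y j k * z k := by
            rw [Finset.mul_sum]; exact Finset.sum_congr rfl fun k _ => by ring
        _ = 0 := by rw [h0, mul_zero]
    have h0 := h2 U (fun i _ => by rw [hUY, mul_zero, Matrix.trace_zero])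
    have hUU : U * Uᵀ = (z ⬝ᵥ z) • Matrix.vecMulVec v v := by
      ext i j
      simp only [hU, Matrix.mul_apply, Matrix.vecMulVec_apply, Matrix.transpose_apply,
        Matrix.smul_apply, smul_eq_mul, dotProduct]
      rw [Finset.sum_mul]
      exact Finset.sum_congr rfl fun k _ => by ring
    rw [hUU, Matrix.mul_smul, Matrix.trace_smul] at h0
    have htr : (S * Matrix.vecMulVec v v).trace = star v ⬝ᵥ S *ᵥ v := by
      simp only [Matrix.trace, Matrix.mul_apply, Matrix.vecMulVec_apply, Matrix.diag,
        dotProduct, Matrix.mulVec, star_trivial, Finset.mul_sum]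
      exact Finset.sum_congr rfl fun i _ => Finset.sum_congr rfl fun j _ => by ring
    rw [htr] at h0
    have hzz : 0 < z ⬝ᵥ z := by
      have hnn : 0 ≤ z ⬝ᵥ z := Finset.sum_nonneg fun k _ => mul_self_nonneg _
      rcases hnn.lt_or_eq with h | h
      · exact h
      · exact absurd ((dotProduct_self_eq_zero).mp h.symm) hz
    exact nonneg_of_mul_nonneg_right (by simpa [smul_eq_mul] using h0) hzz
  -- trace decomposition
  have hdecomp : ∀ M : Matrix (Fin n) (Fin n) ℝ,
      (C * M).trace = (S * M).trace + ∑ i, lam i * (A i * M).trace := by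
    intro M
    have hCeq : C = S + ∑ i, lam i • A i := by
      rw [hSdef, Slack, sub_add_cancel]
    rw [hCeq, Matrix.add_mul, Matrix.trace_add, Finset.sum_mul, Matrix.trace_sum]
    congr 1
    refine Finset.sum_congr rfl fun i _ => ?_
    rw [Matrix.smul_mul, Matrix.trace_smul, smul_eq_mul]
  -- value at Y Yᵀ
  have hSYY : (S * (Y * Yᵀ)).trace = 0 := by
    rw [← Matrix.mul_assoc, hSY, Matrix.zero_mul, Matrix.trace_zero]
  have hYYval : (C * (Y * Yᵀ)).trace = ∑ i, lam i * b i := by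
    rw [hdecomp, hSYY, zero_add]
    refine Finset.sum_congr rfl fun i _ => ?_
    by_cases h : (A i * (Y * Yᵀ)).trace = b i
    · rw [h]
    · rw [hcomp i h]; ring
  -- conclude
  rw [hYYval, hdecomp X]
  have h1 : 0 ≤ (S * X).trace := trace_mul_nonneg_of_posSemidef hSpsd hXfeas.1
  have h2' : ∑ i, lam i * b i ≤ ∑ i, lam i * (A i * X).trace := by
    refine Finset.sum_le_sum fun i _ => ?_
    have := hXfeas.2 i
    by_cases hi : (i : ℕ) < m₁
    · rw [if_pos hi] at this; rw [this]
    · rw [if_neg hi] at this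
      exact mul_le_mul_of_nonneg_left this (hpos i (le_of_not_gt hi))
  linarith
end
end
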